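/- The Lie algebra T*su(2) (the T*-extension of su(2)) has no Lie subalgebra of dimension 5. -/

import Mathlib

set_option maxHeartbeats 1000000


section TStarExtension

variable {L : Type*} [LieRing L] [LieAlgebra ℝ L]

/-- The Lie ring structure of the `T*`-extension `T*g = g ⊕ g*` of a real Lie algebra `g`:
`[u + α, v + β] = [u,v] + ad*_u β − ad*_v α`, where `(ad*_u α)(v) = −α([u,v])`.
(Here `⁅u, β⁆ = ad*_u β` is the coadjoint action of Mathlib's
`Module.Dual.instLieRingModule`, for which `⁅u, β⁆ v = −β ⁅u, v⁆`.) -/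
instance tstarLieRing : LieRing (L × Module.Dual ℝ L) where
  bracket x y := (⁅x.1, y.1⁆, ⁅x.1, y.2⁆ - ⁅y.1, x.2⁆)
  add_lie x y z := by
    refine Prod.ext ?_ ?_
    · show ⁅(x + y).1, z.1⁆ = (⁅x.1, z.1⁆ + ⁅y.1, z.1⁆ : L)
      simp [add_lie]
    · show ⁅(x + y).1, z.2⁆ - ⁅z.1, (x + y).2⁆ =
        (⁅x.1, z.2⁆ - ⁅z.1, x.2⁆) + (⁅y.1, z.2⁆ - ⁅z.1, y.2⁆)
      simp only [Prod.fst_add, Prod.snd_add, add_lie, lie_add]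
      abel
  lie_add x y z := by
    refine Prod.ext ?_ ?_
    · show ⁅x.1, (y + z).1⁆ = (⁅x.1, y.1⁆ + ⁅x.1, z.1⁆ : L)
      simp [lie_add]
    · show ⁅x.1, (y + z).2⁆ - ⁅(y + z).1, x.2⁆ =
        (⁅x.1, y.2⁆ - ⁅y.1, x.2⁆) + (⁅x.1, z.2⁆ - ⁅z.1, x.2⁆)
      simp only [Prod.fst_add, Prod.snd_add, add_lie, lie_add]
      abel
  lie_self x := by
    refine Prod.ext ?_ ?_
    · show ⁅x.1, x.1⁆ = (0 : L)
      simp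
    · show ⁅x.1, x.2⁆ - ⁅x.1, x.2⁆ = (0 : Module.Dual ℝ L)
      simp
  leibniz_lie x y z := by
    refine Prod.ext ?_ ?_
    · show ⁅x.1, ⁅y.1, z.1⁆⁆ = (⁅⁅x.1, y.1⁆, z.1⁆ + ⁅y.1, ⁅x.1, z.1⁆⁆ : L)
      exact leibniz_lie _ _ _
    · show ⁅x.1, ⁅y.1, z.2⁆ - ⁅z.1, y.2⁆⁆ - ⁅⁅y.1, z.1⁆, x.2⁆ =
        (⁅⁅x.1, y.1⁆, z.2⁆ - ⁅z.1, ⁅x.1, y.2⁆ - ⁅y.1, x.2⁆⁆) +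
        (⁅y.1, ⁅x.1, z.2⁆ - ⁅z.1, x.2⁆⁆ - ⁅⁅x.1, z.1⁆, y.2⁆)
      simp only [lie_lie, lie_sub]
      abel

/-- The `T*`-extension is a Lie algebra over `ℝ`. -/
noncomputable instance tstarLieAlgebra : LieAlgebra ℝ (L × Module.Dual ℝ L) where
  lie_smul t x y := by
    refine Prod.ext ?_ ?_
    · show ⁅x.1, (t • y).1⁆ = t • ⁅x.1, y.1⁆
      rw [Prod.smul_fst, lie_smul]
    · show ⁅x.1, (t • y).2⁆ - ⁅(t • y).1, x.2⁆ = t • (⁅x.1, y.2⁆ - ⁅y.1, x.2⁆)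
      ext m
      simp only [Prod.smul_fst, Prod.smul_snd, LinearMap.sub_apply, LinearMap.smul_apply,
        Module.Dual.lie_apply, smul_lie, map_smul, smul_eq_mul, smul_sub]
      ring

/-- The canonical invariant bilinear form of the `T*`-extension:
`⟨u + α, v + β⟩ = α(v) + β(u)`. -/
def tstarForm (x y : L × Module.Dual ℝ L) : ℝ := x.2 y.1 + y.2 x.1

/-- The bracket of the `T*`-extension, unfolded. -/
lemma tstar_bracket_def (x y : L × Module.Dual ℝ L) :
    ⁅x, y⁆ = (⁅x.1, y.1⁆, ⁅x.1, y.2⁆ - ⁅y.1, x.2⁆) := rfl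

end TStarExtension

/-- The `T*`-extension `T*su(2)` of `su(2)` (the 3-dimensional real Lie algebra with
basis `e₁, e₂, e₃` and brackets `[e₁,e₂] = e₃`, `[e₂,e₃] = e₁`, `[e₃,e₁] = e₂`) has no
Lie subalgebra of dimension 5. -/
theorem tstar_su2_no_five_dim_subalgebra
    {L : Type*} [LieRing L] [LieAlgebra ℝ L]
    (b : Module.Basis (Fin 3) ℝ L)
    (h12 : ⁅b 0, b 1⁆ = b 2) (h23 : ⁅b 1, b 2⁆ = b 0) (h31 : ⁅b 2, b 0⁆ = b 1) :
    ∀ H : LieSubalgebra ℝ (L × Module.Dual ℝ L), Module.finrank ℝ H ≠ 5 := by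
  intro H hH5
  haveI : FiniteDimensional ℝ L := Module.Finite.of_basis b
  -- remaining structure constants
  have h10 : ⁅b 1, b 0⁆ = -(b 2) := by rw [← lie_skew, h12]
  have h32 : ⁅b 2, b 1⁆ = -(b 0) := by rw [← lie_skew, h23]
  have h03 : ⁅b 0, b 2⁆ = -(b 1) := by rw [← lie_skew, h31]
  have hL3 : Module.finrank ℝ L = 3 := by
    rw [Module.finrank_eq_card_basis b, Fintype.card_fin]
  have h6 : Module.finrank ℝ (L × Module.Dual ℝ L) = 6 := by
    rw [Module.finrank_prod, hL3, Subspace.dual_finrank_eq, hL3]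
  have h5' : Module.finrank ℝ (H : Submodule ℝ (L × Module.Dual ℝ L)) = 5 := hH5
  -- a nonzero functional vanishing on `H`
  have hlt : (H : Submodule ℝ (L × Module.Dual ℝ L)) < ⊤ := by
    rw [lt_top_iff_ne_top]
    intro h
    rw [h, finrank_top, h6] at h5'
    exact absurd h5' (by norm_num)
  obtain ⟨φ, hφ0, hmap⟩ := Submodule.exists_dual_map_eq_bot_of_lt_top hlt inferInstance
  have hker : (H : Submodule ℝ (L × Module.Dual ℝ L)) ≤ LinearMap.ker φ := by
    intro x hx
    have hx' : φ x ∈ Submodule.map φ (H : Submodule ℝ (L × Module.Dual ℝ L)) :=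
      ⟨x, hx, rfl⟩
    rw [hmap] at hx'
    simpa using hx'
  have heq : (H : Submodule ℝ (L × Module.Dual ℝ L)) = LinearMap.ker φ := by
    apply Submodule.eq_of_le_of_finrank_eq hker
    have hk6 := Module.Dual.finrank_ker_add_one_of_ne_zero hφ0
    rw [h6] at hk6
    omega
  have hmem : ∀ x : L × Module.Dual ℝ L, x ∈ H ↔ φ x = 0 := by
    intro x
    rw [← LieSubalgebra.mem_toSubmodule, heq, LinearMap.mem_ker]
  have hcl : ∀ x y : L × Module.Dual ℝ L, φ x = 0 → φ y = 0 → φ ⁅x, y⁆ = 0 :=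
    fun x y hx hy => (hmem _).mp (H.lie_mem ((hmem x).mpr hx) ((hmem y).mpr hy))
  -- decompose φ
  obtain ⟨aL, haL⟩ : ∃ aL : L →ₗ[ℝ] ℝ, ∀ u : L, φ ((u, 0) : L × Module.Dual ℝ L) = aL u :=
    ⟨φ.comp (LinearMap.inl ℝ L (Module.Dual ℝ L)), fun u => by simp⟩
  obtain ⟨f, hf⟩ : ∃ f : L, ∀ α : Module.Dual ℝ L, φ ((0 : L), α) = α f := by
    refine ⟨φ ((0 : L), b.coord 0) • b 0 + φ ((0 : L), b.coord 1) • b 1 +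
      φ ((0 : L), b.coord 2) • b 2, fun α => ?_⟩
    have hα : α = α (b 0) • b.coord 0 + α (b 1) • b.coord 1 + α (b 2) • b.coord 2 := by
      refine b.ext fun j => ?_
      fin_cases j <;>
        simp [Module.Basis.coord_apply, Module.Basis.repr_self, Finsupp.single_apply]
    conv_lhs => rw [hα]
    have hsum : ((0 : L), α (b 0) • b.coord 0 + α (b 1) • b.coord 1 + α (b 2) • b.coord 2)
        = α (b 0) • (((0 : L), b.coord 0) : L × Module.Dual ℝ L)
          + α (b 1) • (((0 : L), b.coord 1) : L × Module.Dual ℝ L)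
          + α (b 2) • (((0 : L), b.coord 2) : L × Module.Dual ℝ L) := by
      refine Prod.ext ?_ ?_ <;> simp
    rw [hsum]
    simp only [map_add, map_smul, smul_eq_mul]
    ring
  have hsplit : ∀ (u : L) (α : Module.Dual ℝ L), φ (u, α) = aL u + α f := by
    intro u α
    have : ((u, α) : L × Module.Dual ℝ L) = (u, 0) + (0, α) := by
      refine Prod.ext ?_ ?_ <;> simp
    rw [this, map_add, haL, hf]
  by_cases hf0 : f = 0
  · -- case f = 0 : the first components of H fill a hyperplane of su(2) closed under bracket
    have hcond : ∀ u v : L, aL u = 0 → aL v = 0 → aL ⁅u, v⁆ = 0 := by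
      intro u v hu hv
      have hx : φ ((u, 0) : L × Module.Dual ℝ L) = 0 := by rw [haL, hu]
      have hy : φ ((v, 0) : L × Module.Dual ℝ L) = 0 := by rw [haL, hv]
      have h := hcl _ _ hx hy
      have hbr : (⁅((u, 0) : L × Module.Dual ℝ L), (v, 0)⁆) = ((⁅u, v⁆, 0) : L × Module.Dual ℝ L) := by
        rw [tstar_bracket_def]; simp
      rw [hbr, haL] at h
      exact h
    have hkex : ∃ k : Fin 3, aL (b k) ≠ 0 := by
      by_contra hcon
      push_neg at hcon
      apply hφ0
      have hzero : aL = 0 := b.ext fun i => by simp [hcon i]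
      apply LinearMap.ext
      rintro ⟨u, α⟩
      rw [hsplit, hf0, hzero]
      simp
    obtain ⟨k, hk⟩ := hkex
    fin_cases k
    · -- aL (b 0) ≠ 0
      have hu : aL ((-(aL (b 2))) • b 0 + (aL (b 0)) • b 2) = 0 := by
        simp only [map_add, map_smul, smul_eq_mul]; ring
      have hv : aL ((aL (b 1)) • b 0 - (aL (b 0)) • b 1) = 0 := by
        simp only [map_sub, map_smul, smul_eq_mul]; ring
      have h := hcond _ _ hu hv
      have hbr : ⁅(-(aL (b 2))) • b 0 + (aL (b 0)) • b 2,
            (aL (b 1)) • b 0 - (aL (b 0)) • b 1⁆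
          = (aL (b 0) * aL (b 0)) • b 0 + (aL (b 0) * aL (b 1)) • b 1
            + (aL (b 0) * aL (b 2)) • b 2 := by
        simp only [lie_add, add_lie, lie_sub, sub_lie, lie_smul, smul_lie, lie_self,
          h12, h23, h31, h10, h32, h03]
        module
      rw [hbr] at h
      simp only [map_add, map_smul, smul_eq_mul] at h
      have h1 : aL (b 0) * (aL (b 0) ^ 2 + aL (b 1) ^ 2 + aL (b 2) ^ 2) = 0 := by
        linear_combination h
      rcases mul_eq_zero.mp h1 with h' | h'
      · exact hk h'
      · have h2 : aL (b 0) ^ 2 = 0 := by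
          nlinarith [sq_nonneg (aL (b 1)), sq_nonneg (aL (b 2))]
        exact hk (pow_eq_zero_iff (by norm_num : 2 ≠ 0) |>.mp h2)
    · -- aL (b 1) ≠ 0
      have hu : aL ((aL (b 1)) • b 0 - (aL (b 0)) • b 1) = 0 := by
        simp only [map_sub, map_smul, smul_eq_mul]; ring
      have hv : aL ((aL (b 2)) • b 1 - (aL (b 1)) • b 2) = 0 := by
        simp only [map_sub, map_smul, smul_eq_mul]; ring
      have h := hcond _ _ hu hv
      have hbr : ⁅(aL (b 1)) • b 0 - (aL (b 0)) • b 1,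
            (aL (b 2)) • b 1 - (aL (b 1)) • b 2⁆
          = (aL (b 1) * aL (b 0)) • b 0 + (aL (b 1) * aL (b 1)) • b 1
            + (aL (b 1) * aL (b 2)) • b 2 := by
        simp only [lie_add, add_lie, lie_sub, sub_lie, lie_smul, smul_lie, lie_self,
          h12, h23, h31, h10, h32, h03]
        module
      rw [hbr] at h
      simp only [map_add, map_smul, smul_eq_mul] at h
      have h1 : aL (b 1) * (aL (b 0) ^ 2 + aL (b 1) ^ 2 + aL (b 2) ^ 2) = 0 := by
        linear_combination h
      rcases mul_eq_zero.mp h1 with h' | h'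
      · exact hk h'
      · have h2 : aL (b 1) ^ 2 = 0 := by
          nlinarith [sq_nonneg (aL (b 0)), sq_nonneg (aL (b 2))]
        exact hk (pow_eq_zero_iff (by norm_num : 2 ≠ 0) |>.mp h2)
    · -- aL (b 2) ≠ 0
      have hu : aL ((aL (b 2)) • b 1 - (aL (b 1)) • b 2) = 0 := by
        simp only [map_sub, map_smul, smul_eq_mul]; ring
      have hv : aL ((-(aL (b 2))) • b 0 + (aL (b 0)) • b 2) = 0 := by
        simp only [map_add, map_smul, smul_eq_mul]; ring
      have h := hcond _ _ hu hv
      have hbr : ⁅(aL (b 2)) • b 1 - (aL (b 1)) • b 2,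
            (-(aL (b 2))) • b 0 + (aL (b 0)) • b 2⁆
          = (aL (b 2) * aL (b 0)) • b 0 + (aL (b 2) * aL (b 1)) • b 1
            + (aL (b 2) * aL (b 2)) • b 2 := by
        simp only [lie_add, add_lie, lie_sub, sub_lie, lie_smul, smul_lie, lie_self,
          h12, h23, h31, h10, h32, h03]
        module
      rw [hbr] at h
      simp only [map_add, map_smul, smul_eq_mul] at h
      have h1 : aL (b 2) * (aL (b 0) ^ 2 + aL (b 1) ^ 2 + aL (b 2) ^ 2) = 0 := by
        linear_combination h
      rcases mul_eq_zero.mp h1 with h' | h'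
      · exact hk h'
      · have h2 : aL (b 2) ^ 2 = 0 := by
          nlinarith [sq_nonneg (aL (b 0)), sq_nonneg (aL (b 1))]
        exact hk (pow_eq_zero_iff (by norm_num : 2 ≠ 0) |>.mp h2)
  · -- case f ≠ 0 : f would be central in su(2)
    have hkex : ∃ k : Fin 3, b.repr f k ≠ 0 := by
      by_contra hcon
      push_neg at hcon
      apply hf0
      calc f = ∑ i, b.repr f i • b i := (b.sum_repr f).symm
        _ = 0 := by simp [hcon]
    obtain ⟨k, hkne⟩ := hkex
    have hαf : ∀ (v : L) (α : Module.Dual ℝ L), α f = 0 → α ⁅v, f⁆ = 0 := by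
      intro v α hα
      set δ : Module.Dual ℝ L := (b.repr f k)⁻¹ • b.coord k with hδdef
      have hδf : δ f = 1 := by
        rw [hδdef]
        simp only [LinearMap.smul_apply, Module.Basis.coord_apply, smul_eq_mul]
        exact inv_mul_cancel₀ hkne
      have hx : φ ((0 : L), α) = 0 := by rw [hsplit]; simp [hα]
      have hy : φ (v, (-(aL v)) • δ) = 0 := by
        rw [hsplit]
        simp only [LinearMap.smul_apply, hδf, smul_eq_mul]
        ring
      have h := hcl _ _ hx hy
      have hbr : (⁅(((0 : L), α) : L × Module.Dual ℝ L), (v, (-(aL v)) • δ)⁆)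
          = (((0 : L), -⁅v, α⁆) : L × Module.Dual ℝ L) := by
        rw [tstar_bracket_def]; simp
      rw [hbr, hsplit] at h
      simp only [map_zero, LinearMap.neg_apply, Module.Dual.lie_apply, zero_add, neg_neg] at h
      exact h
    have hfe : f = b.repr f 0 • b 0 + b.repr f 1 • b 1 + b.repr f 2 • b 2 := by
      calc f = ∑ i, b.repr f i • b i := (b.sum_repr f).symm
        _ = _ := by rw [Fin.sum_univ_three]
    fin_cases k
    · -- b.repr f 0 ≠ 0
      have hα : ((b.repr f 0) • b.coord 2 - (b.repr f 2) • b.coord 0) f = 0 := by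
        simp only [LinearMap.sub_apply, LinearMap.smul_apply, Module.Basis.coord_apply, smul_eq_mul]
        ring
      have h := hαf (b 1) _ hα
      have hbr : ⁅b 1, f⁆ = (b.repr f 2) • b 0 - (b.repr f 0) • b 2 := by
        conv_lhs => rw [hfe]
        simp only [lie_add, lie_smul, h10, h23, lie_self, smul_neg, smul_zero]
        module
      rw [hbr] at h
      simp only [map_sub, map_smul, LinearMap.sub_apply, LinearMap.smul_apply,
        Module.Basis.coord_apply, Module.Basis.repr_self, Finsupp.single_apply, smul_eq_mul,
        Fin.reduceEq, reduceIte] at h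
      ring_nf at h
      have h2 : (b.repr f 0) ^ 2 = 0 := by nlinarith [sq_nonneg (b.repr f 2)]
      exact hkne (pow_eq_zero_iff (by norm_num : 2 ≠ 0) |>.mp h2)
    · -- b.repr f 1 ≠ 0
      have hα : ((b.repr f 1) • b.coord 0 - (b.repr f 0) • b.coord 1) f = 0 := by
        simp only [LinearMap.sub_apply, LinearMap.smul_apply, Module.Basis.coord_apply, smul_eq_mul]
        ring
      have h := hαf (b 2) _ hα
      have hbr : ⁅b 2, f⁆ = (b.repr f 0) • b 1 - (b.repr f 1) • b 0 := by
        conv_lhs => rw [hfe]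
        simp only [lie_add, lie_smul, h31, h32, lie_self, smul_neg, smul_zero]
        module
      rw [hbr] at h
      simp only [map_sub, map_smul, LinearMap.sub_apply, LinearMap.smul_apply,
        Module.Basis.coord_apply, Module.Basis.repr_self, Finsupp.single_apply, smul_eq_mul,
        Fin.reduceEq, reduceIte] at h
      ring_nf at h
      have h2 : (b.repr f 1) ^ 2 = 0 := by nlinarith [sq_nonneg (b.repr f 0)]
      exact hkne (pow_eq_zero_iff (by norm_num : 2 ≠ 0) |>.mp h2)
    · -- b.repr f 2 ≠ 0
      have hα : ((b.repr f 2) • b.coord 1 - (b.repr f 1) • b.coord 2) f = 0 := by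
        simp only [LinearMap.sub_apply, LinearMap.smul_apply, Module.Basis.coord_apply, smul_eq_mul]
        ring
      have h := hαf (b 0) _ hα
      have hbr : ⁅b 0, f⁆ = (b.repr f 1) • b 2 - (b.repr f 2) • b 1 := by
        conv_lhs => rw [hfe]
        simp only [lie_add, lie_smul, h12, h03, lie_self, smul_neg, smul_zero]
        module
      rw [hbr] at h
      simp only [map_sub, map_smul, LinearMap.sub_apply, LinearMap.smul_apply,
        Module.Basis.coord_apply, Module.Basis.repr_self, Finsupp.single_apply, smul_eq_mul,
        Fin.reduceEq, reduceIte] at h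
      ring_nf at h
      have h2 : (b.repr f 2) ^ 2 = 0 := by nlinarith [sq_nonneg (b.repr f 1)]
      exact hkne (pow_eq_zero_iff (by norm_num : 2 ≠ 0) |>.mp h2)
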